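/- The set K_n := { β ∇(β) ∇²(β) ⋯ ∇^{n−2}(β) : β ∈ P_n^n } is a subgroup of the pure braid group P_n. -/

import Mathlib

/-! Basic setup: the braid group `B_n` as a presented group.  Generators are
indexed by `ℕ`; the generator with index `i` represents `σ_i` for
`1 ≤ i ≤ n-1`, and all generators with index `0` or `≥ n` are trivialized. -/

/-- The relators of the braid group `B_n`. -/
def braidRels (n : ℕ) : Set (FreeGroup ℕ) :=
  { r | (∃ i, 1 ≤ i ∧ i + 2 ≤ n ∧
          r = .of i * .of (i+1) * .of i * (.of (i+1) * .of i * .of (i+1))⁻¹) ∨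
        (∃ i j, 1 ≤ i ∧ i + 2 ≤ j ∧ j + 1 ≤ n ∧
          r = .of i * .of j * (.of j * .of i)⁻¹) ∨
        (∃ i, (i = 0 ∨ n ≤ i) ∧ r = .of i) }

/-- The braid group on `n` strings. -/
abbrev BraidGroup (n : ℕ) := PresentedGroup (braidRels n)

/-- The standard generator `σ_i` of `B_n` (nontrivial for `1 ≤ i ≤ n-1`). -/
def σ (n i : ℕ) : BraidGroup n := PresentedGroup.of i

/-- The transposition `(i, i+1)` of the strings `{1, …, n}`, as a permutation of `ℕ`. -/
def permOfGen (n i : ℕ) : Equiv.Perm ℕ :=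
  if 1 ≤ i ∧ i + 1 ≤ n then Equiv.swap i (i+1) else 1

theorem braidRels_lift (n : ℕ) :
    ∀ r ∈ braidRels n, FreeGroup.lift (permOfGen n) r = 1 := by
  rintro r (⟨i, h1, h2, rfl⟩ | ⟨i, j, h1, h2, h3, rfl⟩ | ⟨i, hi, rfl⟩)
  · have e1 : permOfGen n i = Equiv.swap i (i+1) := if_pos ⟨h1, by omega⟩
    have e2 : permOfGen n (i+1) = Equiv.swap (i+1) (i+2) := if_pos ⟨by omega, by omega⟩
    simp only [map_mul, map_inv, FreeGroup.lift_apply_of, e1, e2]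
    rw [mul_inv_eq_one]
    have l : Equiv.swap i (i+1) * Equiv.swap (i+1) (i+2) * Equiv.swap i (i+1)
        = Equiv.swap i (i+2) := by
      have h := Equiv.swap_mul_swap_mul_swap
        (x := i+2) (y := i+1) (z := i) (by omega) (by omega)
      rwa [Equiv.swap_comm (i+1) i, Equiv.swap_comm (i+2) (i+1)] at h
    have r : Equiv.swap (i+1) (i+2) * Equiv.swap i (i+1) * Equiv.swap (i+1) (i+2)
        = Equiv.swap i (i+2) := by
      have h := Equiv.swap_mul_swap_mul_swap
        (x := i) (y := i+1) (z := i+2) (by omega) (by omega)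
      rwa [Equiv.swap_comm (i+2) i] at h
    rw [l, r]
  · have e1 : permOfGen n i = Equiv.swap i (i+1) := if_pos ⟨h1, by omega⟩
    have e2 : permOfGen n j = Equiv.swap j (j+1) := if_pos ⟨by omega, by omega⟩
    simp only [map_mul, map_inv, FreeGroup.lift_apply_of, e1, e2]
    rw [mul_inv_eq_one]
    have hd : (Equiv.swap i (i+1)).Disjoint (Equiv.swap j (j+1)) := by
      intro x
      rcases eq_or_ne x i with rfl | hxi
      · right; exact Equiv.swap_apply_of_ne_of_ne (by omega) (by omega)
      rcases eq_or_ne x (i+1) with rfl | hxi1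
      · right; exact Equiv.swap_apply_of_ne_of_ne (by omega) (by omega)
      · left; exact Equiv.swap_apply_of_ne_of_ne hxi hxi1
    exact hd.commute
  · have h : permOfGen n i = 1 := if_neg (by omega)
    simp [h]

/-- The canonical projection `Π : B_n → S_n`, sending `σ_i` to the
transposition `(i, i+1)` (strings are `1, …, n`, permutations of `ℕ`
fixing everything else). -/
def braidPerm (n : ℕ) : BraidGroup n →* Equiv.Perm ℕ :=
  PresentedGroup.toGroup (braidRels_lift n)

theorem braidPerm_σ (n i : ℕ) : braidPerm n (σ n i) = permOfGen n i :=
  PresentedGroup.toGroup.of (braidRels_lift n)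

/-- The pure braid group `P_n = ker Π`. -/
def PureBraid (n : ℕ) : Subgroup (BraidGroup n) := (braidPerm n).ker

/-- The standard pure braid generator
`A_{ij} = σ_{j-1} ⋯ σ_{i+1} σ_i² σ_{i+1}⁻¹ ⋯ σ_{j-1}⁻¹`. -/
def A (n i : ℕ) : ℕ → BraidGroup n
  | 0 => 1
  | j+1 => if j ≤ i then σ n i ^ 2 else σ n j * A n i j * (σ n j)⁻¹

/-- The group `P_n^j` of pure `j`-braids, generated by `A_{ij}` for `1 ≤ i < j`. -/
def P (n j : ℕ) : Subgroup (BraidGroup n) :=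
  Subgroup.closure ((fun i => A n i j) '' Set.Ico 1 j)

/-- Partial sums `N_1 = n_1, N_2 = n_1+n_2, …, N_k = n_1+⋯+n_k` of a list. -/
def partialSums : List ℕ → List ℕ
  | [] => []
  | a :: l => a :: (partialSums l).map (a + ·)

/-- The permutation braid `π_{n₁…n_k}`: the product `σ_1 σ_2 ⋯ σ_{n-1}` with the
letters `σ_{N_1}, …, σ_{N_{k-1}}` omitted. -/
def piBraid (n : ℕ) (ns : List ℕ) : BraidGroup n :=
  (((List.range n).filter fun i => decide (1 ≤ i ∧ i ∉ partialSums ns)).map (σ n)).prod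

/-- The permutation braid `π_n = σ_1 σ_2 ⋯ σ_{n-1}`. -/
def piN (n : ℕ) : BraidGroup n := piBraid n [n]

/-- A braid is woven of type `(n₁, …, n_k)` if it can be written as
`π_{n₁…n_k} β_{N_1} β_{N_2} ⋯ β_{N_k}` with each `β_{N_i} ∈ P_n^{N_i}`. -/
def IsWovenOfType (n : ℕ) (ns : List ℕ) (w : BraidGroup n) : Prop :=
  ∃ b : ℕ → BraidGroup n,
    (∀ m ∈ partialSums ns, b m ∈ P n m) ∧
    w = piBraid n ns * ((partialSums ns).map b).prod

/-- `W_n^1 = π_n P_n^n`, the set of woven braids of type `(n)`. -/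
def W1 (n : ℕ) : Set (BraidGroup n) := { w | ∃ b ∈ P n n, w = piN n * b }
theorem σ_sq_mem (n i : ℕ) : σ n i ^ 2 ∈ PureBraid n := by
  have h : braidPerm n (σ n i) ^ 2 = 1 := by
    rw [braidPerm_σ]
    unfold permOfGen
    split_ifs
    · rw [sq]; exact Equiv.swap_mul_self _ _
    · simp
  simpa [PureBraid, MonoidHom.mem_ker, map_pow] using h

theorem A_mem_pure (n i j : ℕ) : A n i j ∈ PureBraid n := by
  induction j with
  | zero => exact one_mem _
  | succ j ih =>
    show A n i (j+1) ∈ _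
    rw [A]
    split_ifs
    · exact σ_sq_mem n i
    · simp only [PureBraid, MonoidHom.mem_ker, map_mul, map_inv] at ih ⊢
      simp [ih]

/-- The generator `A_{ij}` as an element of the pure braid group `P_n`. -/
def Agen (n i j : ℕ) : ↥(PureBraid n) := ⟨A n i j, A_mem_pure n i j⟩

/-- `f` is the homomorphism `∇ : P_n → P_n` of the paper, determined by
`∇(A_{1j}) = 1` and `∇(A_{ij}) = A_{i-1,j-1}` for `i ≥ 2`. -/
def IsNabla (n : ℕ) (f : ↥(PureBraid n) →* ↥(PureBraid n)) : Prop :=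
  (∀ j, 1 < j → j ≤ n → f (Agen n 1 j) = 1) ∧
  (∀ i j, 2 ≤ i → i < j → j ≤ n → f (Agen n i j) = Agen n (i-1) (j-1))

/-- Conjugation by `π_n` as a homomorphism `P_n → P_n`, `α ↦ π_n α π_n⁻¹`. -/
def conjPiHom (n : ℕ) : ↥(PureBraid n) →* ↥(PureBraid n) where
  toFun α := ⟨piN n * ↑α * (piN n)⁻¹,
    Subgroup.Normal.conj_mem (MonoidHom.normal_ker _) ↑α α.2 (piN n)⟩
  map_one' := by ext; simp
  map_mul' a b := by ext; push_cast; group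

/-- The product `β ∇(β) ∇²(β) ⋯ ∇^{m-1}(β)`. -/
def weave (n : ℕ) (f : ↥(PureBraid n) →* ↥(PureBraid n)) (m : ℕ)
    (β : ↥(PureBraid n)) : ↥(PureBraid n) :=
  ((List.range m).map fun t => (⇑f)^[t] β).prod

/-- The set `K_n = { β ∇(β) ∇²(β) ⋯ ∇^{n-2}(β) : β ∈ P_n^n }`. -/
def Kset (n : ℕ) (f : ↥(PureBraid n) →* ↥(PureBraid n)) : Set ↥(PureBraid n) :=
  { k | ∃ β : ↥(PureBraid n), (β : BraidGroup n) ∈ P n n ∧ k = weave n f (n-1) β }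
section BraidLemmas

variable {n : ℕ}

theorem mk_rel {r : FreeGroup ℕ} (hr : r ∈ braidRels n) :
    PresentedGroup.mk (braidRels n) r = 1 := by
  change (QuotientGroup.mk r : BraidGroup n) = 1
  rw [QuotientGroup.eq_one_iff]
  exact Subgroup.subset_normalClosure hr

theorem braid_rel {t : ℕ} (h1 : 1 ≤ t) (h2 : t + 2 ≤ n) :
    σ n t * σ n (t+1) * σ n t = σ n (t+1) * σ n t * σ n (t+1) := by
  have h := mk_rel (n := n) (Or.inl ⟨t, h1, h2, rfl⟩)
  rw [map_mul, map_mul, map_inv, map_mul, map_mul, mul_inv_eq_one] at h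
  exact h

theorem sigma_triv {i : ℕ} (h : i = 0 ∨ n ≤ i) : σ n i = 1 :=
  mk_rel (Or.inr (Or.inr ⟨i, h, rfl⟩))

theorem sigma_comm {i j : ℕ} (h : i + 2 ≤ j) : Commute (σ n i) (σ n j) := by
  rcases Nat.eq_zero_or_pos i with rfl | hi
  · rw [sigma_triv (Or.inl rfl)]; exact Commute.one_left _
  rcases le_or_gt (j+1) n with hj | hj
  · have hc := mk_rel (n := n) (Or.inr (Or.inl ⟨i, j, hi, h, hj, rfl⟩))
    rw [map_mul, map_inv, map_mul, map_mul, mul_inv_eq_one] at hc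
    exact hc
  · rw [sigma_triv (Or.inr (by omega : n ≤ j))]; exact Commute.one_right _

theorem A_zero (i : ℕ) : A n i 0 = 1 := rfl

theorem A_succ_of_lt {i m : ℕ} (h : i < m) :
    A n i (m+1) = σ n m * A n i m * (σ n m)⁻¹ := by
  rw [A, if_neg (by omega)]

theorem A_self (i : ℕ) : A n i (i+1) = σ n i ^ 2 := by
  rw [A, if_pos le_rfl]

theorem A_comm_of_le {t i : ℕ} (h : t + 2 ≤ i) (m : ℕ) :
    Commute (σ n t) (A n i m) := by
  induction m with
  | zero => rw [A_zero]; exact Commute.one_right _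
  | succ j ih =>
    rw [A]
    split_ifs
    · exact (sigma_comm h).pow_right 2
    · exact ((sigma_comm (by omega : t + 2 ≤ j)).mul_right ih).mul_right
        (sigma_comm (by omega : t + 2 ≤ j)).inv_right

theorem A_comm_of_ge {t i : ℕ} (h : i + 2 ≤ t) :
    ∀ m, m + 1 ≤ t → Commute (σ n t) (A n i m) := by
  intro m
  induction m with
  | zero => intro _; rw [A_zero]; exact Commute.one_right _
  | succ j ih =>
    intro hj
    rw [A]
    split_ifs
    · exact ((sigma_comm h).symm).pow_right 2
    · exact (((sigma_comm (by omega : j + 2 ≤ t)).symm.mul_right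
        (ih (by omega))).mul_right (sigma_comm (by omega : j + 2 ≤ t)).symm.inv_right)

end BraidLemmas

section GenericGroup

variable {G : Type*} [Group G]

theorem braid_h1 {x y : G} (h : x*y*x = y*x*y) : x*y*x⁻¹ = y⁻¹*x*y := by
  calc x*y*x⁻¹ = y⁻¹*(y*x*y)*x⁻¹ := by group
  _ = y⁻¹*(x*y*x)*x⁻¹ := by rw [h]
  _ = y⁻¹*x*y := by group

theorem braid_h2 {x y : G} (h : x*y*x = y*x*y) : x*y⁻¹*x⁻¹ = y⁻¹*x⁻¹*y := by
  calc x*y⁻¹*x⁻¹ = (x*y*x⁻¹)⁻¹ := by group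
  _ = (y⁻¹*x*y)⁻¹ := by rw [braid_h1 h]
  _ = y⁻¹*x⁻¹*y := by group

theorem braid_conj1 {x y : G} (h : x*y*x = y*x*y) : x*(y*(x*x)*y⁻¹)*x⁻¹ = y*y := by
  calc x*(y*(x*x)*y⁻¹)*x⁻¹ = (x*y*x)*(x*y⁻¹*x⁻¹) := by group
  _ = (y*x*y)*(y⁻¹*x⁻¹*y) := by rw [h, braid_h2 h]
  _ = y*y := by group

theorem braid_conj2 {x y : G} (h : x*y*x = y*x*y) : x*(y*y)*x⁻¹ = y⁻¹*(x*x)*y := by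
  calc x*(y*y)*x⁻¹ = (x*y*x⁻¹)*(x*y*x⁻¹) := by group
  _ = (y⁻¹*x*y)*(y⁻¹*x*y) := by rw [braid_h1 h]
  _ = y⁻¹*(x*x)*y := by group

theorem braid_conj3 {x y a : G} (h : x*y*x = y*x*y) (hc : Commute y a) :
    x*(y*(x*a*x⁻¹)*y⁻¹)*x⁻¹ = y*(x*a*x⁻¹)*y⁻¹ := by
  have hy : y*a*y⁻¹ = a := by rw [hc.eq]; group
  calc x*(y*(x*a*x⁻¹)*y⁻¹)*x⁻¹ = (x*y*x)*a*(x*y*x)⁻¹ := by group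
  _ = (y*x*y)*a*(y*x*y)⁻¹ := by rw [h]
  _ = y*(x*(y*a*y⁻¹)*x⁻¹)*y⁻¹ := by group
  _ = y*(x*a*x⁻¹)*y⁻¹ := by rw [hy]

theorem conj_step {g s a b : G} (hc : Commute g s) (h : g*a*g⁻¹ = b) :
    g*(s*a*s⁻¹)*g⁻¹ = s*b*s⁻¹ := by
  calc g*(s*a*s⁻¹)*g⁻¹ = (g*s)*a*(g*s)⁻¹ := by group
  _ = (s*g)*a*(s*g)⁻¹ := by rw [hc.eq]
  _ = s*(g*a*g⁻¹)*s⁻¹ := by group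
  _ = s*b*s⁻¹ := by rw [h]

theorem conj_inv_eq {g a b : G} (h : g*a*g⁻¹ = b) : g⁻¹*b*g = a := by
  rw [← h]; group

theorem conj_comm_left {g a : G} (hc : Commute g a) : g*a*g⁻¹ = a := by
  rw [hc.eq]; group

theorem conj_comm_right {g a : G} (hc : Commute g a) : g⁻¹*a*g = a := by
  rw [hc.inv_left.eq]; group

end GenericGroup
section ConjLemmas

variable {n : ℕ}

theorem M1 {t : ℕ} (h1 : 1 ≤ t) (h2 : t + 2 ≤ n) :
    ∀ m, t + 2 ≤ m → σ n t * A n t m * (σ n t)⁻¹ = A n (t+1) m := by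
  intro m hm
  induction m, hm using Nat.le_induction with
  | base =>
    have e : t + 2 = (t+1) + 1 := rfl
    rw [e, A_succ_of_lt (by omega : t < t+1), A_self, A_self, pow_two, pow_two]
    exact braid_conj1 (braid_rel h1 h2)
  | succ m hm ih =>
    rw [A_succ_of_lt (by omega : t < m), A_succ_of_lt (by omega : t+1 < m)]
    exact conj_step (sigma_comm (by omega : t + 2 ≤ m)) ih

theorem M2 {t : ℕ} (h1 : 1 ≤ t) (h2 : t + 2 ≤ n) :
    ∀ m, t + 2 ≤ m →
      σ n t * A n (t+1) m * (σ n t)⁻¹ = (A n (t+1) m)⁻¹ * A n t m * A n (t+1) m := by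
  intro m hm
  induction m, hm using Nat.le_induction with
  | base =>
    have e : t + 2 = (t+1) + 1 := rfl
    rw [e, A_succ_of_lt (by omega : t < t+1), A_self, A_self, pow_two, pow_two]
    rw [braid_conj2 (braid_rel h1 h2)]
    group
  | succ m hm ih =>
    rw [A_succ_of_lt (by omega : t < m), A_succ_of_lt (by omega : t+1 < m)]
    rw [conj_step (sigma_comm (by omega : t + 2 ≤ m)) ih]
    group

theorem M3 {t i : ℕ} (h1 : 1 ≤ t) (h2 : t + 2 ≤ n) (hi : i < t) :
    ∀ m, t + 2 ≤ m → σ n t * A n i m * (σ n t)⁻¹ = A n i m := by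
  intro m hm
  induction m, hm using Nat.le_induction with
  | base =>
    have e : t + 2 = (t+1) + 1 := rfl
    rw [e, A_succ_of_lt (by omega : i < t+1), A_succ_of_lt (by omega : i < t)]
    exact braid_conj3 (braid_rel h1 h2) (A_comm_of_ge (by omega) t (by omega))
  | succ m hm ih =>
    rw [A_succ_of_lt (by omega : i < m)]
    exact conj_step (sigma_comm (by omega : t + 2 ≤ m)) ih

theorem A_mem_P {i : ℕ} (hi : 1 ≤ i) (hin : i < n) : A n i n ∈ P n n :=
  Subgroup.subset_closure ⟨i, ⟨hi, hin⟩, rfl⟩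

theorem closure_mem_normalizer {G : Type*} [Group G] {S : Set G} {g : G}
    (hf : ∀ s ∈ S, g * s * g⁻¹ ∈ Subgroup.closure S)
    (hb : ∀ s ∈ S, g⁻¹ * s * g ∈ Subgroup.closure S) :
    g ∈ Subgroup.normalizer (Subgroup.closure S : Set G) := by
  have key : ∀ (u : G), (∀ s ∈ S, u * s * u⁻¹ ∈ Subgroup.closure S) →
      ∀ x ∈ Subgroup.closure S, u * x * u⁻¹ ∈ Subgroup.closure S := by
    intro u hu x hx
    induction hx using Subgroup.closure_induction with
    | mem s hs => exact hu s hs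
    | one => simpa using one_mem _
    | mul x y _ _ hx hy =>
      have e : u*(x*y)*u⁻¹ = (u*x*u⁻¹)*(u*y*u⁻¹) := by group
      rw [e]; exact mul_mem hx hy
    | inv x _ hx =>
      have e : u*x⁻¹*u⁻¹ = (u*x*u⁻¹)⁻¹ := by group
      rw [e]; exact inv_mem hx
  rw [Subgroup.mem_normalizer_iff]
  intro h
  constructor
  · exact key g hf h
  · intro hh
    have := key g⁻¹ (by simpa using hb) _ hh
    rwa [show g⁻¹*(g*h*g⁻¹)*(g⁻¹)⁻¹ = h by group] at this

theorem sigma_mem_normalizer {t : ℕ} (h1 : 1 ≤ t) (h2 : t + 2 ≤ n) :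
    σ n t ∈ Subgroup.normalizer (P n n : Set (BraidGroup n)) := by
  have hA1 : σ n t * A n t n * (σ n t)⁻¹ = A n (t+1) n := M1 h1 h2 n h2
  have hA1' : (σ n t)⁻¹ * A n (t+1) n * σ n t = A n t n := conj_inv_eq hA1
  have hA2 : σ n t * A n (t+1) n * (σ n t)⁻¹ =
      (A n (t+1) n)⁻¹ * A n t n * A n (t+1) n := M2 h1 h2 n h2
  have hA2' : (σ n t)⁻¹ * A n t n * σ n t = A n t n * A n (t+1) n * (A n t n)⁻¹ := by
    have hA : A n t n = A n (t+1) n * (σ n t * A n (t+1) n * (σ n t)⁻¹) * (A n (t+1) n)⁻¹ := by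
      rw [hA2]; group
    calc (σ n t)⁻¹ * A n t n * σ n t
        = ((σ n t)⁻¹ * A n (t+1) n * σ n t) * A n (t+1) n *
          ((σ n t)⁻¹ * A n (t+1) n * σ n t)⁻¹ := by rw [hA]; group
      _ = A n t n * A n (t+1) n * (A n t n)⁻¹ := by rw [hA1']
  apply closure_mem_normalizer
  · rintro s ⟨i, ⟨hi1, hi2⟩, rfl⟩
    show σ n t * A n i n * (σ n t)⁻¹ ∈ P n n
    by_cases hit : i = t
    · subst hit; rw [hA1]; exact A_mem_P (by omega) (by omega)
    by_cases hit1 : i = t + 1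
    · subst hit1; rw [hA2]
      exact mul_mem (mul_mem (inv_mem (A_mem_P (by omega) (by omega)))
        (A_mem_P h1 (by omega))) (A_mem_P (by omega) (by omega))
    by_cases hlt : i < t
    · rw [M3 h1 h2 hlt n h2]; exact A_mem_P hi1 hi2
    · rw [conj_comm_left (A_comm_of_le (by omega) n)]; exact A_mem_P hi1 hi2
  · rintro s ⟨i, ⟨hi1, hi2⟩, rfl⟩
    show (σ n t)⁻¹ * A n i n * σ n t ∈ P n n
    by_cases hit : i = t
    · subst hit; rw [hA2']
      exact mul_mem (mul_mem (A_mem_P h1 (by omega)) (A_mem_P (by omega) (by omega)))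
        (inv_mem (A_mem_P h1 (by omega)))
    by_cases hit1 : i = t + 1
    · subst hit1; rw [hA1']; exact A_mem_P h1 (by omega)
    by_cases hlt : i < t
    · rw [conj_inv_eq (M3 h1 h2 hlt n h2)]; exact A_mem_P hi1 hi2
    · rw [conj_comm_right (A_comm_of_le (by omega) n)]; exact A_mem_P hi1 hi2

/-- The subgroup generated by `σ_1, …, σ_{n-2}`. -/
def Sig (n : ℕ) : Subgroup (BraidGroup n) :=
  Subgroup.closure {x | ∃ s, 1 ≤ s ∧ s + 2 ≤ n ∧ x = σ n s}

theorem sigma_mem_Sig {s : ℕ} (h1 : 1 ≤ s) (h2 : s + 2 ≤ n) : σ n s ∈ Sig n := by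
  rw [Sig]; exact Subgroup.subset_closure ⟨s, h1, h2, rfl⟩

theorem Sig_le_normalizer : Sig n ≤ Subgroup.normalizer (P n n : Set (BraidGroup n)) := by
  rw [Sig, Subgroup.closure_le]
  rintro x ⟨s, hs1, hs2, rfl⟩
  exact sigma_mem_normalizer hs1 hs2

theorem A_mem_Sig : ∀ j i, 1 ≤ i → i < j → j + 1 ≤ n → A n i j ∈ Sig n := by
  intro j
  induction j with
  | zero => intro i _ h; omega
  | succ j ih =>
    intro i hi1 hi2 hj
    rw [A]
    split_ifs with h
    · exact pow_mem (sigma_mem_Sig hi1 (by omega)) 2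
    · have hσ : σ n j ∈ Sig n := sigma_mem_Sig (by omega) (by omega)
      exact mul_mem (mul_mem hσ (ih i hi1 (by omega) (by omega))) (inv_mem hσ)

theorem P_le_Sig {j : ℕ} (hj : j + 1 ≤ n) : P n j ≤ Sig n := by
  rw [P, Subgroup.closure_le]
  rintro x ⟨i, hi, rfl⟩
  simp only [Set.mem_Ico] at hi
  exact A_mem_Sig j i hi.1 hi.2 hj

end ConjLemmas
section WeaveLemmas

variable {n : ℕ} (f : ↥(PureBraid n) →* ↥(PureBraid n))

theorem weave_zero (β : ↥(PureBraid n)) : weave n f 0 β = 1 := by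
  simp [weave]

theorem weave_succ_left (m : ℕ) (β : ↥(PureBraid n)) :
    weave n f (m+1) β = β * f (weave n f m β) := by
  unfold weave
  rw [List.range_succ_eq_map, List.map_cons, List.prod_cons, map_list_prod,
    List.map_map, List.map_map]
  have h : ((fun t => (⇑f)^[t] β) ∘ Nat.succ) = (⇑f ∘ fun t => (⇑f)^[t] β) := by
    funext t; simp [Function.comp, Function.iterate_succ_apply']
  rw [h]
  simp

theorem weave_succ_right (m : ℕ) (β : ↥(PureBraid n)) :
    weave n f (m+1) β = weave n f m β * (⇑f)^[m] β := by
  unfold weave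
  rw [List.range_succ, List.map_append, List.prod_append, List.map_singleton,
    List.prod_singleton]

theorem weave_one (m : ℕ) : weave n f m (1 : ↥(PureBraid n)) = 1 := by
  induction m with
  | zero => exact weave_zero f 1
  | succ m ih => rw [weave_succ_right, ih, iterate_map_one, mul_one]

theorem iterate_weave (t m : ℕ) (β : ↥(PureBraid n)) :
    (⇑f)^[t] (weave n f m β) = weave n f m ((⇑f)^[t] β) := by
  induction m with
  | zero => rw [weave_zero, weave_zero, iterate_map_one]
  | succ m ih =>
    rw [weave_succ_right, weave_succ_right, iterate_map_mul, ih,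
      ← Function.iterate_add_apply, ← Function.iterate_add_apply, Nat.add_comm]

theorem weave_telescope (m : ℕ) (k : ↥(PureBraid n)) :
    weave n f m (k * (f k)⁻¹) = k * ((⇑f)^[m] k)⁻¹ := by
  induction m with
  | zero => rw [weave_zero]; simp
  | succ m ih =>
    rw [weave_succ_left, ih, map_mul, map_inv,
      show f ((⇑f)^[m] k) = (⇑f)^[m+1] k from (Function.iterate_succ_apply' (⇑f) m k).symm]
    group

end WeaveLemmas
section SubtypeLemmas

variable {n : ℕ}

/-- The subgroup of the pure braid group generated by the `A_{ij}`, `1 ≤ i < j`. -/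
def Sgrp (n j : ℕ) : Subgroup ↥(PureBraid n) :=
  Subgroup.closure ((fun i => Agen n i j) '' Set.Ico 1 j)

theorem map_Sgrp (j : ℕ) : (Sgrp n j).map (PureBraid n).subtype = P n j := by
  rw [Sgrp, MonoidHom.map_closure, Set.image_image, P]
  rfl

theorem mem_Sgrp_iff {j : ℕ} {x : ↥(PureBraid n)} :
    x ∈ Sgrp n j ↔ (↑x : BraidGroup n) ∈ P n j := by
  constructor
  · intro h
    rw [← map_Sgrp j]
    exact Subgroup.mem_map_of_mem _ h
  · intro h
    rw [← map_Sgrp j] at h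
    obtain ⟨y, hy, hyx⟩ := h
    have hyx' : y = x := Subtype.ext hyx
    rwa [← hyx']

theorem Sgrp_one : Sgrp n 1 = ⊥ := by
  rw [Sgrp, Set.Ico_self, Set.image_empty, Subgroup.closure_empty]

theorem Sgrp_norm {j : ℕ} (hj : j + 1 ≤ n) :
    ∀ x ∈ Sgrp n j, (↑x : BraidGroup n) ∈ Subgroup.normalizer (P n n : Set (BraidGroup n)) :=
  fun _ hx => Sig_le_normalizer (P_le_Sig hj (mem_Sgrp_iff.1 hx))

variable (nabla : ↥(PureBraid n) →* ↥(PureBraid n))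

theorem nabla_Sgrp (hnabla : IsNabla n nabla) {j : ℕ} (h2 : 2 ≤ j) (hjn : j ≤ n) :
    ∀ x ∈ Sgrp n j, nabla x ∈ Sgrp n (j-1) := by
  intro x hx
  induction hx using Subgroup.closure_induction with
  | mem s hs =>
    obtain ⟨i, hi, rfl⟩ := hs
    simp only [Set.mem_Ico] at hi
    rcases eq_or_lt_of_le hi.1 with h1 | h1
    · rw [← h1, hnabla.1 j (by omega) hjn]; exact one_mem _
    · rw [hnabla.2 i j (by omega) hi.2 hjn]
      exact Subgroup.subset_closure ⟨i-1, by simp only [Set.mem_Ico]; omega, rfl⟩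
  | one => rw [map_one]; exact one_mem _
  | mul x y _ _ hx hy => rw [map_mul]; exact mul_mem hx hy
  | inv x _ hx => rw [map_inv]; exact inv_mem hx

theorem iterate_Sgrp (hnabla : IsNabla n nabla) :
    ∀ t, t + 1 ≤ n → ∀ x ∈ Sgrp n n, (⇑nabla)^[t] x ∈ Sgrp n (n - t) := by
  intro t
  induction t with
  | zero => intro _ x hx; simpa using hx
  | succ t ih =>
    intro ht x hx
    rw [Function.iterate_succ_apply']
    have h1 := ih (by omega) x hx
    have h2 := nabla_Sgrp nabla hnabla (j := n - t) (by omega) (by omega) _ h1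
    rwa [show n - t - 1 = n - (t+1) by omega] at h2

theorem nabla_pow_one (hnabla : IsNabla n nabla) (hn : 2 ≤ n) :
    ∀ x ∈ Sgrp n n, (⇑nabla)^[n-1] x = 1 := by
  intro x hx
  have h := iterate_Sgrp nabla hnabla (n-1) (by omega) x hx
  rwa [show n - (n-1) = 1 by omega, Sgrp_one, Subgroup.mem_bot] at h

end SubtypeLemmas
/-- The set `K_n = { β ∇(β) ∇²(β) ⋯ ∇^{n-2}(β) : β ∈ P_n^n }`
is a subgroup of the pure braid group `P_n`. -/
theorem Kset_is_subgroup (n : ℕ) (hn : 2 ≤ n)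
    (nabla : ↥(PureBraid n) →* ↥(PureBraid n)) (hnabla : IsNabla n nabla) :
    ∃ K : Subgroup ↥(PureBraid n), (K : Set ↥(PureBraid n)) = Kset n nabla := by
  set C : Set ↥(PureBraid n) :=
    {k | (↑(k * (nabla k)⁻¹) : BraidGroup n) ∈ P n n ∧
      (⇑nabla)^[n-1] k = 1 ∧ (↑k : BraidGroup n) ∈ Subgroup.normalizer (P n n : Set (BraidGroup n))} with hC
  have hC1 : (1 : ↥(PureBraid n)) ∈ C := by
    refine ⟨by simpa using one_mem (P n n), ?_, by simpa using one_mem Subgroup.normalizer (P n n : Set (BraidGroup n))⟩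
    rw [iterate_map_one]
  have hCm : ∀ {a b : ↥(PureBraid n)}, a ∈ C → b ∈ C → a * b ∈ C := by
    rintro a b ⟨ha1, ha2, ha3⟩ ⟨hb1, hb2, hb3⟩
    refine ⟨?_, ?_, ?_⟩
    · have e : a*b*(nabla (a*b))⁻¹ = (a * (b*(nabla b)⁻¹) * a⁻¹) * (a*(nabla a)⁻¹) := by
        rw [map_mul]; group
      rw [e]
      push_cast
      exact mul_mem ((Subgroup.mem_normalizer_iff.1 ha3 _).1 hb1) ha1
    · rw [iterate_map_mul, ha2, hb2, mul_one]
    · push_cast; exact mul_mem ha3 hb3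
  have hCi : ∀ {a : ↥(PureBraid n)}, a ∈ C → a⁻¹ ∈ C := by
    rintro a ⟨ha1, ha2, ha3⟩
    refine ⟨?_, ?_, ?_⟩
    · have e : a⁻¹*(nabla a⁻¹)⁻¹ = a⁻¹ * (a*(nabla a)⁻¹)⁻¹ * (a⁻¹)⁻¹ := by
        rw [map_inv]; group
      rw [e]
      push_cast
      have h := (Subgroup.mem_normalizer_iff.1 (inv_mem ha3)
        ((↑(a*(nabla a)⁻¹) : BraidGroup n)⁻¹)).1 (inv_mem ha1)
      simpa [mul_assoc] using h
    · rw [iterate_map_inv, ha2, inv_one]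
    · push_cast; exact inv_mem ha3
  refine ⟨{ carrier := C, one_mem' := hC1,
            mul_mem' := fun ha hb => hCm ha hb, inv_mem' := fun ha => hCi ha }, ?_⟩
  ext k
  simp only [Subgroup.coe_set_mk, hC, Set.mem_setOf_eq, Kset]
  constructor
  · rintro ⟨h1, h2, _⟩
    refine ⟨k * (nabla k)⁻¹, h1, ?_⟩
    rw [weave_telescope, h2]
    simp
  · rintro ⟨β, hβ, rfl⟩
    have hβS : β ∈ Sgrp n n := mem_Sgrp_iff.2 hβ
    have hone : (⇑nabla)^[n-1] β = 1 := nabla_pow_one nabla hnabla hn β hβS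
    have h2 : (⇑nabla)^[n-1] (weave n nabla (n-1) β) = 1 := by
      rw [iterate_weave, hone, weave_one]
    have h3 : ∀ m, m + 1 ≤ n →
        (↑(weave n nabla m β) : BraidGroup n) ∈ Subgroup.normalizer (P n n : Set (BraidGroup n)) := by
      intro m
      induction m with
      | zero => intro _; rw [weave_zero]; simpa using one_mem _
      | succ m ih =>
        intro hm
        rw [weave_succ_right]
        push_cast
        refine mul_mem (ih (by omega)) ?_
        rcases Nat.eq_zero_or_pos m with rfl | hm0
        · simpa using Subgroup.le_normalizer hβ
        · exact Sgrp_norm (j := n - m) (by omega) _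
            (iterate_Sgrp nabla hnabla m (by omega) β hβS)
    have hk : weave n nabla (n-1) β * (nabla (weave n nabla (n-1) β))⁻¹ = β := by
      have e1 := weave_succ_left nabla (n-1) β
      have e2 := weave_succ_right nabla (n-1) β
      rw [hone, mul_one] at e2
      rw [e2] at e1
      nth_rewrite 1 [e1]
      group
    refine ⟨by rw [hk]; exact hβ, h2, h3 (n-1) (by omega)⟩
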